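/- For every word w ∈ Σ*: μ_q(wa)₁₂ ≺ μ_q(wb)₁₂, and μ_q(bw)₁₂ ≺ μ_q(awa)₁₂ ≺ μ_q(awb)₁₂. -/

import Mathlib

open Polynomial

/-- The letter `a` is encoded by `false`, the letter `b` by `true`.
`μ_q` of a single letter. -/
noncomputable def muqLetter : Bool → Matrix (Fin 2) (Fin 2) (Polynomial ℤ)
  | false => !![X + X ^ 2, 1; X, 1]
  | true  => !![X + 2 * X ^ 2 + X ^ 3 + X ^ 4, 1 + X; X + X ^ 2, 1]

/-- The monoid homomorphism `μ_q : Σ* → M₂(ℤ[q])`, extended multiplicatively,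
with the empty word mapped to the identity matrix. -/
noncomputable def muq (w : List Bool) : Matrix (Fin 2) (Fin 2) (Polynomial ℤ) :=
  (w.map muqLetter).prod


/-- `f ≺ g` iff `f ≠ g` and `g - f` has nonnegative integer coefficients. -/
def PolyPrec (f g : Polynomial ℤ) : Prop :=
  f ≠ g ∧ ∀ i : ℕ, 0 ≤ (g - f).coeff i

/-- `f` has nonnegative coefficients. -/
def NN (f : Polynomial ℤ) : Prop := ∀ i : ℕ, 0 ≤ f.coeff i

lemma NN.add {f g : Polynomial ℤ} (hf : NN f) (hg : NN g) : NN (f + g) := fun i => by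
  rw [Polynomial.coeff_add]; exact add_nonneg (hf i) (hg i)

lemma NN.mul {f g : Polynomial ℤ} (hf : NN f) (hg : NN g) : NN (f * g) := fun i => by
  rw [Polynomial.coeff_mul]
  exact Finset.sum_nonneg fun p _ => mul_nonneg (hf _) (hg _)

lemma NN.X : NN (X : Polynomial ℤ) := fun i => by
  rw [Polynomial.coeff_X]; split <;> norm_num

lemma NN.one : NN (1 : Polynomial ℤ) := fun i => by
  rw [Polynomial.coeff_one]; split <;> norm_num

lemma NN.zero : NN (0 : Polynomial ℤ) := fun i => by simp

lemma NN.pow {f : Polynomial ℤ} (hf : NN f) (n : ℕ) : NN (f ^ n) := by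
  induction n with
  | zero => simpa using NN.one
  | succ n ih => rw [pow_succ]; exact ih.mul hf

lemma NN.eval1 {f : Polynomial ℤ} (hf : NN f) : 0 ≤ f.eval 1 := by
  rw [Polynomial.eval_eq_sum]
  exact Finset.sum_nonneg fun n _ => by simpa using hf n

/-- The invariant carried along the induction on words. -/
structure Good (M : Matrix (Fin 2) (Fin 2) (Polynomial ℤ)) : Prop where
  h00 : NN (M 0 0)
  h01 : NN (M 0 1)
  h10 : NN (M 1 0)
  h11 : NN (M 1 1)
  hrel : NN (M 0 0 - X * M 0 1)
  hlt : (M 0 1).eval 1 < (M 0 0).eval 1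
  hD : NN ((X + X^2) * M 0 0 + M 1 0 - ((X^2 + X^3 + X^4) * M 0 1 + X * M 1 1))
  hD1 : 1 ≤ ((X + X^2) * M 0 0 + M 1 0 - ((X^2 + X^3 + X^4) * M 0 1 + X * M 1 1)).eval 1

lemma muq_append (w : List Bool) (c : Bool) :
    muq (w ++ [c]) = muq w * muqLetter c := by
  simp [muq]

lemma muq_cons (c : Bool) (w : List Bool) :
    muq (c :: w) = muqLetter c * muq w := by
  simp [muq]

lemma mul_entries (M A : Matrix (Fin 2) (Fin 2) (Polynomial ℤ)) (i j : Fin 2) :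
    (M * A) i j = M i 0 * A 0 j + M i 1 * A 1 j := by
  rw [Matrix.mul_apply, Fin.sum_univ_two]

lemma good_muq (w : List Bool) : Good (muq w) := by
  induction w using List.reverseRecOn with
  | nil =>
    have h : muq [] = 1 := by simp [muq]
    rw [h]
    constructor <;>
      simp [Matrix.one_apply, NN.one, NN.zero, NN.X] <;>
      intro i <;> simp [Polynomial.coeff_X_pow, Polynomial.coeff_X] <;>
      split <;> norm_num
  | append_singleton w c ih =>
    obtain ⟨h00, h01, h10, h11, hrel, hlt, hD, hD1⟩ := ih
    set M := muq w with hM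
    rw [muq_append]
    have h01e : (0:ℤ) ≤ (M 0 1).eval 1 := h01.eval1
    have h10e : (0:ℤ) ≤ (M 1 0).eval 1 := h10.eval1
    have h00e : (1:ℤ) ≤ (M 0 0).eval 1 := by linarith
    cases c with
    | false =>
      have e00 : (M * muqLetter false) 0 0 = M 0 0 * (X + X^2) + M 0 1 * X := by
        rw [mul_entries]; simp [muqLetter]
      have e01 : (M * muqLetter false) 0 1 = M 0 0 * 1 + M 0 1 * 1 := by
        rw [mul_entries]; simp [muqLetter]
      have e10 : (M * muqLetter false) 1 0 = M 1 0 * (X + X^2) + M 1 1 * X := by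
        rw [mul_entries]; simp [muqLetter]
      have e11 : (M * muqLetter false) 1 1 = M 1 0 * 1 + M 1 1 * 1 := by
        rw [mul_entries]; simp [muqLetter]
      constructor
      · rw [e00]; exact (h00.mul (NN.X.add (NN.X.pow 2))).add (h01.mul NN.X)
      · rw [e01]; exact (h00.mul NN.one).add (h01.mul NN.one)
      · rw [e10]; exact (h10.mul (NN.X.add (NN.X.pow 2))).add (h11.mul NN.X)
      · rw [e11]; exact (h10.mul NN.one).add (h11.mul NN.one)
      · rw [e00, e01]
        have : M 0 0 * (X + X^2) + M 0 1 * X - X * (M 0 0 * 1 + M 0 1 * 1)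
            = X^2 * M 0 0 := by ring
        rw [this]; exact (NN.X.pow 2).mul h00
      · rw [e00, e01]; simp only [Polynomial.eval_add, Polynomial.eval_mul,
          Polynomial.eval_pow, Polynomial.eval_X, Polynomial.eval_one]
        nlinarith
      · rw [e00, e01, e10, e11]
        have : (X + X^2) * (M 0 0 * (X + X^2) + M 0 1 * X) + (M 1 0 * (X + X^2) + M 1 1 * X)
            - ((X^2 + X^3 + X^4) * (M 0 0 * 1 + M 0 1 * 1) + X * (M 1 0 * 1 + M 1 1 * 1))
            = X^3 * (M 0 0 - X * M 0 1) + X^2 * M 1 0 := by ring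
        rw [this]
        exact ((NN.X.pow 3).mul hrel).add ((NN.X.pow 2).mul h10)
      · rw [e00, e01, e10, e11]
        have : (X + X^2) * (M 0 0 * (X + X^2) + M 0 1 * X) + (M 1 0 * (X + X^2) + M 1 1 * X)
            - ((X^2 + X^3 + X^4) * (M 0 0 * 1 + M 0 1 * 1) + X * (M 1 0 * 1 + M 1 1 * 1))
            = X^3 * (M 0 0 - X * M 0 1) + X^2 * M 1 0 := by ring
        rw [this]; simp only [Polynomial.eval_add, Polynomial.eval_mul, Polynomial.eval_sub,
          Polynomial.eval_pow, Polynomial.eval_X, Polynomial.eval_one]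
        nlinarith
    | true =>
      have e00 : (M * muqLetter true) 0 0
          = M 0 0 * (X + 2*X^2 + X^3 + X^4) + M 0 1 * (X + X^2) := by
        rw [mul_entries]; simp [muqLetter]
      have e01 : (M * muqLetter true) 0 1 = M 0 0 * (1 + X) + M 0 1 * 1 := by
        rw [mul_entries]; simp [muqLetter]
      have e10 : (M * muqLetter true) 1 0
          = M 1 0 * (X + 2*X^2 + X^3 + X^4) + M 1 1 * (X + X^2) := by
        rw [mul_entries]; simp [muqLetter]
      have e11 : (M * muqLetter true) 1 1 = M 1 0 * (1 + X) + M 1 1 * 1 := by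
        rw [mul_entries]; simp [muqLetter]
      have nnB : NN (X + 2*X^2 + X^3 + X^4 : Polynomial ℤ) := by
        have h2 : NN (2*X^2 : Polynomial ℤ) := by
          have : (2*X^2 : Polynomial ℤ) = X^2 + X^2 := by ring
          rw [this]; exact (NN.X.pow 2).add (NN.X.pow 2)
        exact ((NN.X.add h2).add (NN.X.pow 3)).add (NN.X.pow 4)
      have nnXX : NN (X + X^2 : Polynomial ℤ) := NN.X.add (NN.X.pow 2)
      have nn1X : NN (1 + X : Polynomial ℤ) := NN.one.add NN.X
      constructor
      · rw [e00]; exact (h00.mul nnB).add (h01.mul nnXX)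
      · rw [e01]; exact (h00.mul nn1X).add (h01.mul NN.one)
      · rw [e10]; exact (h10.mul nnB).add (h11.mul nnXX)
      · rw [e11]; exact (h10.mul nn1X).add (h11.mul NN.one)
      · rw [e00, e01]
        have : M 0 0 * (X + 2*X^2 + X^3 + X^4) + M 0 1 * (X + X^2)
            - X * (M 0 0 * (1 + X) + M 0 1 * 1)
            = (X^2 + X^3 + X^4) * M 0 0 + X^2 * M 0 1 := by ring
        rw [this]
        exact ((((NN.X.pow 2).add (NN.X.pow 3)).add (NN.X.pow 4)).mul h00).add
          ((NN.X.pow 2).mul h01)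
      · rw [e00, e01]; simp only [Polynomial.eval_add, Polynomial.eval_mul,
          Polynomial.eval_pow, Polynomial.eval_X, Polynomial.eval_one,
          Polynomial.eval_ofNat]
        nlinarith
      · rw [e00, e01, e10, e11]
        have : (X + X^2) * (M 0 0 * (X + 2*X^2 + X^3 + X^4) + M 0 1 * (X + X^2))
            + (M 1 0 * (X + 2*X^2 + X^3 + X^4) + M 1 1 * (X + X^2))
            - ((X^2 + X^3 + X^4) * (M 0 0 * (1 + X) + M 0 1 * 1)
              + X * (M 1 0 * (1 + X) + M 1 1 * 1))
            = (X^3 + X^4 + X^5 + X^6) * M 0 0 + X^3 * M 0 1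
              + (X^2 + X^3 + X^4) * M 1 0 + X^2 * M 1 1 := by ring
        rw [this]
        have nnA : NN (X^3 + X^4 + X^5 + X^6 : Polynomial ℤ) :=
          ((((NN.X.pow 3)).add (NN.X.pow 4)).add (NN.X.pow 5)).add (NN.X.pow 6)
        have nnC : NN (X^2 + X^3 + X^4 : Polynomial ℤ) :=
          ((NN.X.pow 2).add (NN.X.pow 3)).add (NN.X.pow 4)
        exact (((nnA.mul h00).add ((NN.X.pow 3).mul h01)).add (nnC.mul h10)).add
          ((NN.X.pow 2).mul h11)
      · rw [e00, e01, e10, e11]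
        have : (X + X^2) * (M 0 0 * (X + 2*X^2 + X^3 + X^4) + M 0 1 * (X + X^2))
            + (M 1 0 * (X + 2*X^2 + X^3 + X^4) + M 1 1 * (X + X^2))
            - ((X^2 + X^3 + X^4) * (M 0 0 * (1 + X) + M 0 1 * 1)
              + X * (M 1 0 * (1 + X) + M 1 1 * 1))
            = (X^3 + X^4 + X^5 + X^6) * M 0 0 + X^3 * M 0 1
              + (X^2 + X^3 + X^4) * M 1 0 + X^2 * M 1 1 := by ring
        rw [this]
        have h11e : (0:ℤ) ≤ (M 1 1).eval 1 := h11.eval1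
        simp only [Polynomial.eval_add, Polynomial.eval_mul, Polynomial.eval_pow,
          Polynomial.eval_X, Polynomial.eval_one]
        nlinarith

/-- Key fact: a polynomial with nonnegative coefficients and positive value at 1
gives a `PolyPrec`. -/
lemma polyPrec_of (f g : Polynomial ℤ) (h : NN (g - f)) (h1 : 0 < (g - f).eval 1) :
    PolyPrec f g := by
  refine ⟨fun hfg => ?_, h⟩
  rw [hfg, sub_self] at h1
  simp at h1

/-- Part 1, for an arbitrary word. -/
lemma part1 (w : List Bool) :
    PolyPrec (muq (w ++ [false]) 0 1) (muq (w ++ [true]) 0 1) := by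
  obtain ⟨h00, h01, h10, h11, hrel, hlt, hD, hD1⟩ := good_muq w
  set M := muq w with hM
  have h01e : (0:ℤ) ≤ (M 0 1).eval 1 := h01.eval1
  have ef : muq (w ++ [false]) 0 1 = M 0 0 * 1 + M 0 1 * 1 := by
    rw [muq_append, mul_entries]; simp [muqLetter]; rfl
  have et : muq (w ++ [true]) 0 1 = M 0 0 * (1 + X) + M 0 1 * 1 := by
    rw [muq_append, mul_entries]; simp [muqLetter]; rfl
  apply polyPrec_of
  · rw [ef, et]
    have : M 0 0 * (1 + X) + M 0 1 * 1 - (M 0 0 * 1 + M 0 1 * 1) = X * M 0 0 := by ring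
    rw [this]; exact NN.X.mul h00
  · rw [ef, et]
    have : M 0 0 * (1 + X) + M 0 1 * 1 - (M 0 0 * 1 + M 0 1 * 1) = X * M 0 0 := by ring
    rw [this]
    simp only [Polynomial.eval_mul, Polynomial.eval_X]
    nlinarith

theorem muq12_increasing_on_small_changes (w : List Bool) :
    PolyPrec (muq (w ++ [false]) 0 1) (muq (w ++ [true]) 0 1) ∧
    PolyPrec (muq (true :: w) 0 1) (muq (false :: w ++ [false]) 0 1) ∧
    PolyPrec (muq (false :: w ++ [false]) 0 1) (muq (false :: w ++ [true]) 0 1) := by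
  refine ⟨part1 w, ?_, ?_⟩
  · -- part 2
    obtain ⟨h00, h01, h10, h11, hrel, hlt, hD, hD1⟩ := good_muq w
    set M := muq w with hM
    have ef : muq (true :: w) 0 1
        = (X + 2*X^2 + X^3 + X^4) * M 0 1 + (1 + X) * M 1 1 := by
      rw [muq_cons, mul_entries]; simp [muqLetter]; rfl
    have eg : muq (false :: w ++ [false]) 0 1
        = (X + X^2) * (M 0 0 * 1 + M 0 1 * 1) + 1 * (M 1 0 * 1 + M 1 1 * 1) := by
      have h : (false :: w ++ [false]) = false :: (w ++ [false]) := by simp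
      rw [h, muq_cons, mul_entries, muq_append, mul_entries, mul_entries]
      simp [muqLetter]; rfl
    have key : muq (false :: w ++ [false]) 0 1 - muq (true :: w) 0 1
        = (X + X^2) * M 0 0 + M 1 0 - ((X^2 + X^3 + X^4) * M 0 1 + X * M 1 1) := by
      rw [ef, eg]; ring
    apply polyPrec_of
    · rw [key]; exact hD
    · rw [key]; linarith
  · -- part 3 : part 1 applied to `false :: w`
    have h := part1 (false :: w)
    simpa using h
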